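/- Assume [a₁,a₂] ⊆ [0,1] with a₁ < a₂, that m is strictly increasing on [a₁,a₂], and that a₁ < b < a₂. Then there exist a constant M > 0 and s₀ > 0 such that sup_{x ∈ [a₁,b]} w(s,x) ≤ M for every s ≥ s₀. -/

import Mathlib

open MeasureTheory Filter Set

/-- The Neumann principal eigenvalue of `-φ'' - 2 s m' φ' + c φ = λ φ` on `(0,1)`,
via its variational characterization. -/
noncomputable def lambdaN (m c : ℝ → ℝ) (s : ℝ) : ℝ :=
  sInf {l : ℝ | ∃ φ : ℝ → ℝ, ContDiff ℝ 1 φ ∧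
    (∫ x in (0:ℝ)..1, Real.exp (2 * s * m x) * (φ x) ^ 2) = 1 ∧
    l = ∫ x in (0:ℝ)..1, Real.exp (2 * s * m x) * ((deriv φ x) ^ 2 + c x * (φ x) ^ 2)}

/-- `v` is a positive, `L²`-normalized principal eigenfunction (in the transformed
variable `w = e^{s m} φ`) associated with the eigenvalue `lam` and parameter `s`. -/
def IsPrincipalEigenfunction (m c : ℝ → ℝ) (lam s : ℝ) (v : ℝ → ℝ) : Prop :=
  ContDiff ℝ 2 v ∧ (∀ x ∈ Set.Icc (0:ℝ) 1, 0 < v x) ∧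
  (∀ x ∈ Set.Ioo (0:ℝ) 1,
    -(deriv (deriv v) x) + (s ^ 2 * (deriv m x) ^ 2 + s * deriv (deriv m) x + c x) * v x
      = lam * v x) ∧
  deriv v 0 = s * v 0 * deriv m 0 ∧ deriv v 1 = s * v 1 * deriv m 1 ∧
  (∫ x in (0:ℝ)..1, (v x) ^ 2) = 1

lemma lambdaN_le (m c : ℝ → ℝ) (hm : Continuous m) (hc : Continuous c)
    (s chi clo : ℝ) (hchi : ∀ x ∈ Icc (0:ℝ) 1, c x ≤ chi)
    (hclo : ∀ x ∈ Icc (0:ℝ) 1, clo ≤ c x) : lambdaN m c s ≤ chi := by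
  have hecont : Continuous (fun x => Real.exp (2 * s * m x)) := by continuity
  set I : ℝ := ∫ x in (0:ℝ)..1, Real.exp (2 * s * m x) with hI
  have hIpos : 0 < I := by
    apply intervalIntegral.intervalIntegral_pos_of_pos (hecont.intervalIntegrable 0 1)
      (fun x => Real.exp_pos _) one_pos
  set K : ℝ := 1 / Real.sqrt I with hK
  have hK2 : K ^ 2 * I = 1 := by
    rw [hK]
    rw [div_pow, one_pow, Real.sq_sqrt hIpos.le]
    field_simp
  -- lower bound for the set
  have hbdd : ∀ l ∈ {l : ℝ | ∃ φ : ℝ → ℝ, ContDiff ℝ 1 φ ∧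
      (∫ x in (0:ℝ)..1, Real.exp (2 * s * m x) * (φ x) ^ 2) = 1 ∧
      l = ∫ x in (0:ℝ)..1, Real.exp (2 * s * m x) * ((deriv φ x) ^ 2 + c x * (φ x) ^ 2)},
      clo ≤ l := by
    rintro l ⟨φ, hφ, hφn, rfl⟩
    have hφc : Continuous φ := hφ.continuous
    have hφ'c : Continuous (deriv φ) := hφ.continuous_deriv le_rfl
    have h1 : ∀ x ∈ Icc (0:ℝ) 1, clo * (Real.exp (2 * s * m x) * (φ x) ^ 2) ≤
        Real.exp (2 * s * m x) * ((deriv φ x) ^ 2 + c x * (φ x) ^ 2) := by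
      intro x hx
      have h2 : clo * (φ x)^2 ≤ (deriv φ x)^2 + c x * (φ x)^2 := by
        nlinarith [sq_nonneg (deriv φ x), sq_nonneg (φ x), hclo x hx]
      calc clo * (Real.exp (2 * s * m x) * (φ x) ^ 2)
          = Real.exp (2 * s * m x) * (clo * (φ x)^2) := by ring
        _ ≤ _ := by
            exact mul_le_mul_of_nonneg_left h2 (Real.exp_pos _).le
    have := intervalIntegral.integral_mono_on (μ := volume) zero_le_one
      (((continuous_const.mul (hecont.mul (hφc.pow 2)))).intervalIntegrable 0 1)
      ((hecont.mul ((hφ'c.pow 2).add (hc.mul (hφc.pow 2)))).intervalIntegrable 0 1) h1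
    calc clo = clo * 1 := by ring
      _ = ∫ x in (0:ℝ)..1, clo * (Real.exp (2 * s * m x) * (φ x) ^ 2) := by
          rw [intervalIntegral.integral_const_mul, hφn]
      _ ≤ _ := this
  have hmem : (∫ x in (0:ℝ)..1, Real.exp (2 * s * m x) *
      ((deriv (fun _ : ℝ => K) x) ^ 2 + c x * ((fun _ : ℝ => K) x) ^ 2)) ∈
      {l : ℝ | ∃ φ : ℝ → ℝ, ContDiff ℝ 1 φ ∧
      (∫ x in (0:ℝ)..1, Real.exp (2 * s * m x) * (φ x) ^ 2) = 1 ∧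
      l = ∫ x in (0:ℝ)..1, Real.exp (2 * s * m x) * ((deriv φ x) ^ 2 + c x * (φ x) ^ 2)} := by
    refine ⟨fun _ => K, contDiff_const, ?_, rfl⟩
    rw [intervalIntegral.integral_mul_const, ← hI]; linarith [hK2]
  have hle := csInf_le ⟨clo, hbdd⟩ hmem
  refine hle.trans ?_
  have hd : (deriv (fun _ : ℝ => K)) = fun _ => (0:ℝ) := by
    funext x; exact deriv_const x K
  have h1 : ∀ x ∈ Icc (0:ℝ) 1, Real.exp (2 * s * m x) *
      ((deriv (fun _ : ℝ => K) x) ^ 2 + c x * ((fun _ : ℝ => K) x) ^ 2) ≤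
      chi * (Real.exp (2 * s * m x) * K ^ 2) := by
    intro x hx
    simp only [hd]
    have := hchi x hx
    have he := (Real.exp_pos (2 * s * m x)).le
    nlinarith [sq_nonneg K, mul_le_mul_of_nonneg_right this (sq_nonneg K)]
  have h2 := intervalIntegral.integral_mono_on (μ := volume) zero_le_one
    ((hecont.mul (((((contDiff_const (c := K)).continuous_deriv le_rfl).pow 2)).add
      (hc.mul (continuous_const.pow 2)))).intervalIntegrable 0 1)
    ((continuous_const.mul (hecont.mul continuous_const)).intervalIntegrable 0 1) h1
  refine h2.trans_eq ?_
  show (∫ x in (0:ℝ)..1, chi * (Real.exp (2 * s * m x) * K ^ 2)) = chi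
  rw [intervalIntegral.integral_const_mul, intervalIntegral.integral_mul_const, ← hI,
    mul_comm I (K^2), hK2, mul_one]

lemma energy_identity (m c : ℝ → ℝ) (hm : ContDiff ℝ 2 m) (hc : Continuous c) (s lam : ℝ)
    (w : ℝ → ℝ) (hw2 : ContDiff ℝ 2 w)
    (hODE : ∀ x ∈ Ioo (0:ℝ) 1, -(deriv (deriv w) x) +
      (s^2*(deriv m x)^2 + s*(deriv (deriv m) x) + c x) * w x = lam * w x)
    (hbc0 : deriv w 0 = s * w 0 * deriv m 0) (hbc1 : deriv w 1 = s * w 1 * deriv m 1) :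
    (∫ x in (0:ℝ)..1, ((deriv w x - s * deriv m x * w x)^2 + (c x - lam) * (w x)^2)) = 0 := by
  have h2 : (2 : WithTop ℕ∞) = 1 + 1 := by norm_num
  have hwd : Differentiable ℝ w := hw2.differentiable (by norm_num)
  have hw1 : ContDiff ℝ 1 (deriv w) := (contDiff_succ_iff_deriv.mp (h2 ▸ hw2)).2.2
  have hwdd : Differentiable ℝ (deriv w) := hw1.differentiable (by norm_num)
  have hwddc : Continuous (deriv (deriv w)) := hw1.continuous_deriv le_rfl
  have hmd : Differentiable ℝ m := hm.differentiable (by norm_num)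
  have hm1 : ContDiff ℝ 1 (deriv m) := (contDiff_succ_iff_deriv.mp (h2 ▸ hm)).2.2
  have hmdd : Differentiable ℝ (deriv m) := hm1.differentiable (by norm_num)
  have hwc : Continuous w := hwd.continuous
  have hwdc : Continuous (deriv w) := hwdd.continuous
  have hmdc : Continuous (deriv m) := hmdd.continuous
  set F : ℝ → ℝ := fun x => deriv w x * w x - s * deriv m x * (w x)^2 with hF
  set h : ℝ → ℝ := fun x => (deriv w x - s * deriv m x * w x)^2 + (c x - lam) * (w x)^2 with hh
  have hFc : Continuous F := by fun_prop
  have hhc : Continuous h := by fun_prop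
  have key : ∀ x ∈ Ioo (0:ℝ) 1, HasDerivAt F (h x) x := by
    intro x hx
    have d1 : HasDerivAt (fun y => deriv w y * w y)
        (deriv (deriv w) x * w x + deriv w x * deriv w x) x :=
      ((hwdd x).hasDerivAt).mul ((hwd x).hasDerivAt)
    have d2 : HasDerivAt (fun y => s * deriv m y * (w y)^2)
        ((s * deriv (deriv m) x) * (w x)^2 +
          (s * deriv m x) * ((2:ℕ) * (w x)^(2-1) * deriv w x)) x := by
      exact (((hmdd x).hasDerivAt).const_mul s).mul (((hwd x).hasDerivAt).pow 2)
    have dF := d1.sub d2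
    have hode := hODE x hx
    have hdd : deriv (deriv w) x =
        (s^2*(deriv m x)^2 + s*(deriv (deriv m) x) + c x) * w x - lam * w x := by
      linarith
    refine (dF : HasDerivAt F _ x).congr_deriv ?_
    rw [hdd]; push_cast; ring
  have := intervalIntegral.integral_eq_sub_of_hasDeriv_right_of_le zero_le_one
    hFc.continuousOn (fun x hx => (key x hx).hasDerivWithinAt)
    (hhc.intervalIntegrable 0 1)
  rw [this]
  have hF1 : F 1 = 0 := by simp only [hF]; rw [hbc1]; ring
  have hF0 : F 0 = 0 := by simp only [hF]; rw [hbc0]; ring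
  rw [hF0, hF1, sub_zero]

set_option maxHeartbeats 1000000 in
/-- The claim in the proof of Lemma 2.4: if `m` is strictly increasing on
`[a₁,a₂] ⊆ [0,1]` and `a₁ < b < a₂`, then the eigenfunctions `w(s,·)` are
uniformly bounded on `[a₁,b]` for all large `s`. -/
theorem eigenfunction_uniformly_bounded_of_strictMono
    (m c : ℝ → ℝ) (hm : ContDiff ℝ 2 m) (hc : Continuous c)
    (w : ℝ → ℝ → ℝ)
    (hw : ∀ s > (0:ℝ), IsPrincipalEigenfunction m c (lambdaN m c s) s (w s))
    (a₁ a₂ b : ℝ) (ha₁ : 0 ≤ a₁) (h12 : a₁ < a₂) (ha₂ : a₂ ≤ 1)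
    (hmono : StrictMonoOn m (Set.Icc a₁ a₂))
    (hb₁ : a₁ < b) (hb₂ : b < a₂) :
    ∃ M > (0:ℝ), ∃ s₀ > (0:ℝ), ∀ s ≥ s₀, ∀ x ∈ Set.Icc a₁ b, w s x ≤ M := by
  have h2 : (2 : WithTop ℕ∞) = 1 + 1 := by norm_num
  have hmd : Differentiable ℝ m := hm.differentiable (by norm_num)
  have hm1 : ContDiff ℝ 1 (deriv m) := (contDiff_succ_iff_deriv.mp (h2 ▸ hm)).2.2
  have hmdc : Continuous (deriv m) := hm1.continuous
  -- min and max of c on [0,1]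
  obtain ⟨xlo, hxlo, hlo'⟩ := isCompact_Icc.exists_isMinOn (nonempty_Icc.mpr zero_le_one)
    (hc.continuousOn (s := Icc (0:ℝ) 1))
  obtain ⟨xhi, hxhi, hhi'⟩ := isCompact_Icc.exists_isMaxOn (nonempty_Icc.mpr zero_le_one)
    (hc.continuousOn (s := Icc (0:ℝ) 1))
  have hlo : ∀ t ∈ Icc (0:ℝ) 1, c xlo ≤ c t := fun t ht => isMinOn_iff.mp hlo' t ht
  have hhi : ∀ t ∈ Icc (0:ℝ) 1, c t ≤ c xhi := fun t ht => isMaxOn_iff.mp hhi' t ht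
  set clo := c xlo with hclodef
  set chi := c xhi with hchidef
  set C2 : ℝ := chi - clo with hC2def
  have hC2 : 0 ≤ C2 := by
    have := hlo xhi hxhi; simp only [hC2def]; linarith
  set M : ℝ := Real.sqrt (1/(a₂ - b)) + (1 + C2)/2 + 1 with hM
  have hMpos : 0 < M := by
    have := Real.sqrt_nonneg (1/(a₂ - b)); simp only [hM]; linarith
  refine ⟨M, hMpos, 1, one_pos, ?_⟩
  intro s hs x hx
  have hs0 : (0:ℝ) < s := lt_of_lt_of_le one_pos hs
  obtain ⟨hw2, hwpos, hODE, hbc0, hbc1, hnorm⟩ := hw s hs0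
  set lam := lambdaN m c s with hlamdef
  have hwd : Differentiable ℝ (w s) := hw2.differentiable (by norm_num)
  have hw1 : ContDiff ℝ 1 (deriv (w s)) := (contDiff_succ_iff_deriv.mp (h2 ▸ hw2)).2.2
  have hwdc : Continuous (deriv (w s)) := hw1.continuous
  have hwc : Continuous (w s) := hwd.continuous
  set g : ℝ → ℝ := fun t => deriv (w s) t - s * deriv m t * w s t with hg
  have hgc : Continuous g := by fun_prop
  -- bound on ∫ g²
  have hlam_le : lam ≤ chi := lambdaN_le m c hm.continuous hc s chi clo hhi hlo
  have hgsq : (∫ t in (0:ℝ)..1, (g t)^2) ≤ C2 := by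
    have hE := energy_identity m c hm hc s lam (w s) hw2 hODE hbc0 hbc1
    have hadd : (∫ t in (0:ℝ)..1, ((deriv (w s) t - s * deriv m t * w s t)^2
        + (c t - lam) * (w s t)^2))
        = (∫ t in (0:ℝ)..1, (g t)^2) + ∫ t in (0:ℝ)..1, (c t - lam) * (w s t)^2 := by
      exact intervalIntegral.integral_add ((hgc.pow 2).intervalIntegrable 0 1)
        (((hc.sub continuous_const).mul (hwc.pow 2)).intervalIntegrable 0 1)
    have h3 : (∫ t in (0:ℝ)..1, (g t)^2) = ∫ t in (0:ℝ)..1, (lam - c t) * (w s t)^2 := by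
      have : (∫ t in (0:ℝ)..1, (lam - c t) * (w s t)^2)
          = - ∫ t in (0:ℝ)..1, (c t - lam) * (w s t)^2 := by
        rw [← intervalIntegral.integral_neg]
        congr 1; funext t; ring
      rw [this]; rw [hadd] at hE; linarith
    rw [h3]
    have hmono2 : ∀ t ∈ Icc (0:ℝ) 1, (lam - c t) * (w s t)^2 ≤ (chi - clo) * (w s t)^2 := by
      intro t ht
      have h4 := hlo t ht
      have := sq_nonneg (w s t)
      nlinarith
    have h5 := intervalIntegral.integral_mono_on (μ := volume) zero_le_one
      (((continuous_const.sub hc).mul (hwc.pow 2)).intervalIntegrable 0 1)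
      ((continuous_const.mul (hwc.pow 2)).intervalIntegrable 0 1) hmono2
    calc (∫ t in (0:ℝ)..1, (lam - c t) * (w s t)^2)
        ≤ ∫ t in (0:ℝ)..1, (chi - clo) * (w s t)^2 := h5
      _ = (chi - clo) * ∫ t in (0:ℝ)..1, (w s t)^2 := intervalIntegral.integral_const_mul _ _
      _ = C2 := by rw [hnorm, hC2def, mul_one]
  -- choose x₀ ∈ [b, a₂] where w is small
  obtain ⟨x₀, hx₀mem, hx₀min'⟩ := isCompact_Icc.exists_isMinOn
    (nonempty_Icc.mpr hb₂.le) (hwc.continuousOn (s := Icc b a₂))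
  have hx₀min : ∀ t ∈ Icc b a₂, w s x₀ ≤ w s t := fun t ht => isMinOn_iff.mp hx₀min' t ht
  have hx₀I : x₀ ∈ Icc (0:ℝ) 1 :=
    ⟨ha₁.trans (hb₁.le.trans hx₀mem.1), hx₀mem.2.trans ha₂⟩
  have hwx₀pos : 0 < w s x₀ := hwpos x₀ hx₀I
  have hwx₀ : w s x₀ ≤ Real.sqrt (1/(a₂ - b)) := by
    have hsq : (a₂ - b) * (w s x₀)^2 ≤ 1 := by
      have h6 : (∫ t in b..a₂, (w s x₀)^2) ≤ ∫ t in b..a₂, (w s t)^2 := by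
        apply intervalIntegral.integral_mono_on (μ := volume) hb₂.le
          (intervalIntegrable_const) ((hwc.pow 2).intervalIntegrable b a₂)
        intro t ht
        have htI : t ∈ Icc (0:ℝ) 1 := ⟨ha₁.trans (hb₁.le.trans ht.1), ht.2.trans ha₂⟩
        have := hx₀min t ht
        show (w s x₀)^2 ≤ (w s t)^2
        nlinarith [hwpos t htI]
      have h7 : (∫ t in b..a₂, (w s t)^2) ≤ ∫ t in (0:ℝ)..1, (w s t)^2 := by
        apply intervalIntegral.integral_mono_interval
          (ha₁.trans hb₁.le) hb₂.le ha₂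
          (Eventually.of_forall fun t => sq_nonneg _)
          ((hwc.pow 2).intervalIntegrable 0 1)
      rw [intervalIntegral.integral_const, smul_eq_mul] at h6
      rw [hnorm] at h7
      linarith
    have h8 : (w s x₀)^2 ≤ 1/(a₂ - b) := by
      rw [le_div_iff₀ (by linarith)]; linarith [hsq]
    calc w s x₀ = Real.sqrt ((w s x₀)^2) := (Real.sqrt_sq hwx₀pos.le).symm
      _ ≤ _ := Real.sqrt_le_sqrt h8
  -- the FTC representation with u = e^{-sm} w
  set u : ℝ → ℝ := fun t => Real.exp (-(s * m t)) * w s t with hu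
  have hud : ∀ t, HasDerivAt u (Real.exp (-(s * m t)) * g t) t := by
    intro t
    have d1 : HasDerivAt (fun y => Real.exp (-(s * m y)))
        (Real.exp (-(s * m t)) * (-(s * deriv m t))) t := by
      exact (((hmd t).hasDerivAt.const_mul s).neg).exp
    have d2 := d1.mul (hwd t).hasDerivAt
    refine (d2 : HasDerivAt u _ t).congr_deriv ?_
    simp only [hg]; ring
  have hxmem : x ∈ Icc a₁ a₂ := ⟨hx.1, hx.2.trans hb₂.le⟩
  have hx₀mem' : x₀ ∈ Icc a₁ a₂ := ⟨hb₁.le.trans hx₀mem.1, hx₀mem.2⟩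
  have hxx₀ : x ≤ x₀ := hx.2.trans hx₀mem.1
  have hmxx₀ : m x ≤ m x₀ := hmono.monotoneOn hxmem hx₀mem' hxx₀
  have hFTC : (∫ t in x..x₀, Real.exp (-(s * m t)) * g t) = u x₀ - u x := by
    apply intervalIntegral.integral_eq_sub_of_hasDerivAt (fun t _ => hud t)
    exact ((Real.continuous_exp.comp ((continuous_const.mul hmd.continuous).neg)).mul hgc).intervalIntegrable x x₀
  -- the main estimate
  have hrepr : w s x = Real.exp (s * m x) * u x₀
      - Real.exp (s * m x) * ∫ t in x..x₀, Real.exp (-(s * m t)) * g t := by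
    rw [hFTC]
    simp only [hu]
    have h1 : Real.exp (s * m x) * Real.exp (-(s * m x)) = 1 := by
      rw [← Real.exp_add]; ring_nf; exact Real.exp_zero
    have h2 : Real.exp (s * m x) * (Real.exp (-(s * m x₀)) * w s x₀) -
        Real.exp (s * m x) * (Real.exp (-(s * m x₀)) * w s x₀ - Real.exp (-(s * m x)) * w s x)
        = (Real.exp (s * m x) * Real.exp (-(s * m x))) * w s x := by ring
    rw [h2, h1, one_mul]
  have hterm1 : Real.exp (s * m x) * u x₀ ≤ w s x₀ := by
    simp only [hu]
    rw [← mul_assoc, ← Real.exp_add]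
    have hle : s * m x + -(s * m x₀) ≤ 0 := by nlinarith
    calc Real.exp (s * m x + -(s * m x₀)) * w s x₀
        ≤ 1 * w s x₀ := by
          apply mul_le_mul_of_nonneg_right _ hwx₀pos.le
          exact Real.exp_le_one_iff.mpr hle
      _ = w s x₀ := one_mul _
  have hterm2 : Real.exp (s * m x) * |∫ t in x..x₀, Real.exp (-(s * m t)) * g t|
      ≤ (1 + C2)/2 := by
    have habs : |∫ t in x..x₀, Real.exp (-(s * m t)) * g t|
        ≤ ∫ t in x..x₀, |Real.exp (-(s * m t)) * g t| :=
      intervalIntegral.abs_integral_le_integral_abs hxx₀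
    have hptwise : ∀ t ∈ Icc x x₀, Real.exp (s * m x) * |Real.exp (-(s * m t)) * g t|
        ≤ (1 + (g t)^2)/2 := by
      intro t ht
      have htmem : t ∈ Icc a₁ a₂ := ⟨hxmem.1.trans ht.1, ht.2.trans hx₀mem'.2⟩
      have hmt : m x ≤ m t := hmono.monotoneOn hxmem htmem ht.1
      obtain ⟨A, hAdef⟩ : ∃ A : ℝ, A = Real.exp (s * m x) * Real.exp (-(s * m t)) := ⟨_, rfl⟩
      have hE1 : A ≤ 1 := by
        rw [hAdef, ← Real.exp_add]
        apply Real.exp_le_one_iff.mpr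
        nlinarith
      have hE0 : (0:ℝ) < A := by rw [hAdef]; positivity
      obtain ⟨gg, hggdef⟩ : ∃ gg : ℝ, gg = g t := ⟨_, rfl⟩
      obtain ⟨G, hGdef⟩ : ∃ G : ℝ, G = |gg| := ⟨_, rfl⟩
      have hGnn : 0 ≤ G := hGdef ▸ abs_nonneg _
      have hG2 : G^2 = gg ^2 := by rw [hGdef]; exact sq_abs _
      have hA2 : A^2 ≤ 1 := by nlinarith
      have key : A * G ≤ (1 + g t ^2)/2 := by
        rw [← hggdef]
        nlinarith [sq_nonneg (A - G), hA2, hG2]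
      calc Real.exp (s * m x) * |Real.exp (-(s * m t)) * g t| = A * G := by
            rw [hAdef, hGdef, hggdef, abs_mul, abs_of_pos (Real.exp_pos _)]; ring
        _ ≤ _ := key
    have step : Real.exp (s * m x) * ∫ t in x..x₀, |Real.exp (-(s * m t)) * g t|
        ≤ ∫ t in x..x₀, (1 + (g t)^2)/2 := by
      rw [← intervalIntegral.integral_const_mul]
      apply intervalIntegral.integral_mono_on (μ := volume) hxx₀ _ _ hptwise
      · exact (continuous_const.mul ((Real.continuous_exp.comp ((continuous_const.mul hmd.continuous).neg)).mul hgc).abs).intervalIntegrable x x₀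
      · exact (((continuous_const.add (hgc.pow 2)).div_const 2)).intervalIntegrable x x₀
    have hg2 : (∫ t in x..x₀, (g t)^2) ≤ C2 := by
      refine le_trans ?_ hgsq
      apply intervalIntegral.integral_mono_interval
        (ha₁.trans hxmem.1) hxx₀ (hx₀mem'.2.trans ha₂)
        (Eventually.of_forall fun t => sq_nonneg _)
        ((hgc.pow 2).intervalIntegrable 0 1)
    have hlen : x₀ - x ≤ 1 := by
      have := hx₀mem'.2.trans ha₂; have := ha₁.trans hxmem.1; linarith
    have hval : (∫ t in x..x₀, (1 + (g t)^2)/2) = ((x₀ - x) + ∫ t in x..x₀, (g t)^2)/2 := by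
      have : (∫ t in x..x₀, (1 + (g t)^2)/2)
          = (∫ t in x..x₀, ((1:ℝ) + (g t)^2)) / 2 := by
        rw [intervalIntegral.integral_div]
      rw [this, intervalIntegral.integral_add (g := fun t => (g t)^2) (intervalIntegrable_const)
        ((hgc.pow 2).intervalIntegrable x x₀), intervalIntegral.integral_const, smul_eq_mul,
        mul_one]
    have hfin : Real.exp (s * m x) * |∫ t in x..x₀, Real.exp (-(s * m t)) * g t|
        ≤ ((x₀ - x) + ∫ t in x..x₀, (g t)^2)/2 := by
      calc Real.exp (s * m x) * |∫ t in x..x₀, Real.exp (-(s * m t)) * g t|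
          ≤ Real.exp (s * m x) * ∫ t in x..x₀, |Real.exp (-(s * m t)) * g t| :=
            mul_le_mul_of_nonneg_left habs (Real.exp_pos _).le
        _ ≤ ∫ t in x..x₀, (1 + (g t)^2)/2 := step
        _ = _ := hval
    linarith
  calc w s x ≤ Real.exp (s * m x) * u x₀
      + Real.exp (s * m x) * |∫ t in x..x₀, Real.exp (-(s * m t)) * g t| := by
        rw [hrepr]
        have h9 : - (Real.exp (s * m x) * ∫ t in x..x₀, Real.exp (-(s * m t)) * g t)
            ≤ Real.exp (s * m x) * |∫ t in x..x₀, Real.exp (-(s * m t)) * g t| := by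
          rw [← mul_neg]
          apply mul_le_mul_of_nonneg_left _ (Real.exp_pos _).le
          exact neg_le_abs _
        linarith
    _ ≤ Real.sqrt (1/(a₂ - b)) + (1 + C2)/2 := add_le_add (hterm1.trans hwx₀) hterm2
    _ ≤ M := by simp only [hM]; linarith
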